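/- Let n : ℕ and l u : Fin n → ℝ with l i ≤ u i for every i, and let g : (Fin n → ℝ) → ℝ be convex on the box B(l,u). Then for every r : ℝ, one has g(x) ≤ r for all x ∈ B(l,u) if and only if g(v) ≤ r for all v in the vertex set V(l,u). (This is the claim that the convex tube constraints need only be imposed at the 2ⁿ vertices of each box cross-section.) -/
import Mathlib

/-- A convex function on a box is bounded above by `r` on the whole box
iff it is bounded above by `r` at each of the box's vertices. -/
theorem convex_le_on_box_iff_le_on_vertices
    (n : ℕ) (l u : Fin n → ℝ) (h : ∀ i, l i ≤ u i)
    (g : (Fin n → ℝ) → ℝ)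
    (hg : ConvexOn ℝ {x : Fin n → ℝ | ∀ i, l i ≤ x i ∧ x i ≤ u i} g)
    (r : ℝ) :
    (∀ x ∈ {x : Fin n → ℝ | ∀ i, l i ≤ x i ∧ x i ≤ u i}, g x ≤ r) ↔
    (∀ v ∈ {x : Fin n → ℝ | ∀ i, x i = l i ∨ x i = u i}, g v ≤ r) := by
  have hVset : {x : Fin n → ℝ | ∀ i, x i = l i ∨ x i = u i}
      = Set.pi Set.univ (fun i => {l i, u i}) := by
    ext x; simp [Set.mem_pi]
  have hBset : {x : Fin n → ℝ | ∀ i, l i ≤ x i ∧ x i ≤ u i}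
      = Set.pi Set.univ (fun i => Set.Icc (l i) (u i)) := by
    ext x; simp [Set.mem_pi, Set.mem_Icc, Pi.le_def, forall_and]
  have hhull : convexHull ℝ {x : Fin n → ℝ | ∀ i, x i = l i ∨ x i = u i}
      = {x : Fin n → ℝ | ∀ i, l i ≤ x i ∧ x i ≤ u i} := by
    rw [hVset, hBset, convexHull_pi]
    have : (fun i => convexHull ℝ ({l i, u i} : Set ℝ)) = fun i => Set.Icc (l i) (u i) := by
      funext i
      rw [convexHull_pair, segment_eq_Icc (h i)]
    rw [this]
  constructor
  · intro H v hv
    apply H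
    have : v ∈ convexHull ℝ {x : Fin n → ℝ | ∀ i, x i = l i ∨ x i = u i} :=
      subset_convexHull ℝ _ hv
    rwa [hhull] at this
  · intro H x hx
    have hsub : {x : Fin n → ℝ | ∀ i, x i = l i ∨ x i = u i}
        ⊆ {x : Fin n → ℝ | ∀ i, l i ≤ x i ∧ x i ≤ u i} := by
      rw [← hhull]; exact subset_convexHull ℝ _
    have hx' : x ∈ convexHull ℝ {x : Fin n → ℝ | ∀ i, x i = l i ∨ x i = u i} := by
      rw [hhull]; exact hx
    obtain ⟨y, hy, hgy⟩ := hg.exists_ge_of_mem_convexHull hsub hx'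
    exact hgy.trans (H y hy)
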